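/- Assume additionally that ρ1·ρ2 = r². Then for every y ∈ ℤ × ℤ≥0 with y(1) ≥ y(2), P_y( τ < ∞ ) = r^{y(1)−y(2)} + ( r·(1−r)/(r−ρ2) )·( ρ1^{y(1)} − r^{y(1)−y(2)}·ρ1^{y(2)} ). -/

import Mathlib

open MeasureTheory ProbabilityTheory Filter

noncomputable section

/-- One step of the walk constrained to the nonnegative quadrant:
`π(x,v) = v` if `x + v ∈ ℤ≥0²`, and `0` otherwise. -/
def stepX (p v : ℤ × ℤ) : ℤ × ℤ :=
  if 0 ≤ (p + v).1 ∧ 0 ≤ (p + v).2 then p + v else p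

/-- One step of the walk constrained only on the second coordinate:
`π₁(y,v) = v` if `y + v ∈ ℤ × ℤ≥0`, and `0` otherwise. -/
def stepY (p v : ℤ × ℤ) : ℤ × ℤ := if 0 ≤ (p + v).2 then p + v else p

/-- Path of the constrained walk `X` driven by the increments `inc`:
`X_0 = x`, `X_{k+1} = X_k + π(X_k, inc_{k+1})`. -/
def pathX (x : ℤ × ℤ) (inc : ℕ → ℤ × ℤ) : ℕ → ℤ × ℤ
  | 0 => x
  | k + 1 => stepX (pathX x inc k) (inc (k + 1))

/-- Path of the walk `Y`, constrained only on the second coordinate, and with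
the first coordinate of each increment reversed:
`Y_0 = y`, `Y_{k+1} = Y_k + π₁(Y_k, 𝕀·inc_{k+1})` where `𝕀(v1,v2) = (−v1,v2)`. -/
def pathY (y : ℤ × ℤ) (inc : ℕ → ℤ × ℤ) : ℕ → ℤ × ℤ
  | 0 => y
  | k + 1 => stepY (pathY y inc k) (-(inc (k + 1)).1, (inc (k + 1)).2)

/-- Hitting time of the set `A` by the path `p`, as an extended natural
number (`⊤` if the set is never hit). -/
def hitTime (A : Set (ℤ × ℤ)) (p : ℕ → ℤ × ℤ) : ℕ∞ :=
  sInf ((fun n : ℕ => (n : ℕ∞)) '' {n : ℕ | p n ∈ A})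

/-- `τ_n`: first time the constrained walk `X` started at `x` hits
`{x : x(1) + x(2) = n}`. -/
def tauN (n : ℤ) (x : ℤ × ℤ) (inc : ℕ → ℤ × ℤ) : ℕ∞ :=
  hitTime {p | p.1 + p.2 = n} (pathX x inc)

/-- `τ_0`: first time the constrained walk `X` started at `x` hits the origin. -/
def tau0 (x : ℤ × ℤ) (inc : ℕ → ℤ × ℤ) : ℕ∞ :=
  hitTime {((0 : ℤ), (0 : ℤ))} (pathX x inc)

/-- `τ`: first time the walk `Y` started at `y` hits `{y : y(1) = y(2)}`. -/
def tauY (y : ℤ × ℤ) (inc : ℕ → ℤ × ℤ) : ℕ∞ :=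
  hitTime {p | p.1 = p.2} (pathY y inc)

/-- `I` is an i.i.d. sequence of `ℤ²`-valued random variables with
`P(I_k = (1,0)) = λ1`, `P(I_k = (−1,0)) = μ1`, `P(I_k = (0,1)) = λ2`,
`P(I_k = (0,−1)) = μ2`. -/
def IncrementsLaw (l1 m1 l2 m2 : ℝ) {Ω : Type} [MeasurableSpace Ω]
    (μ : Measure Ω) (I : ℕ → Ω → ℤ × ℤ) : Prop :=
  (∀ k, Measurable (I k)) ∧
    iIndepFun I μ ∧
    ∀ k, μ (I k ⁻¹' {(1, 0)}) = ENNReal.ofReal l1 ∧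
      μ (I k ⁻¹' {(-1, 0)}) = ENNReal.ofReal m1 ∧
      μ (I k ⁻¹' {(0, 1)}) = ENNReal.ofReal l2 ∧
      μ (I k ⁻¹' {(0, -1)}) = ENNReal.ofReal m2

namespace S17

def ystep (y v : ℤ × ℤ) : ℤ × ℤ := stepY y (-v.1, v.2)

def MV : Finset (ℤ × ℤ) := {(1,0), (-1,0), (0,1), (0,-1)}

def pw (l1 m1 l2 m2 : ℝ) (v : ℤ × ℤ) : ℝ :=
  if v = (1,0) then l1 else if v = (-1,0) then m1 else if v = (0,1) then l2
  else if v = (0,-1) then m2 else 0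

def rr (l1 m1 l2 m2 : ℝ) : ℝ := (l1 + l2) / (m1 + m2)
def Rone (l1 m1 : ℝ) : ℝ := l1 / m1
def Rtwo (l2 m2 : ℝ) : ℝ := l2 / m2
def cc (l1 m1 l2 m2 : ℝ) : ℝ :=
  rr l1 m1 l2 m2 * (1 - rr l1 m1 l2 m2) / (rr l1 m1 l2 m2 - Rtwo l2 m2)

def hfun (l1 m1 l2 m2 : ℝ) (y : ℤ × ℤ) : ℝ :=
  rr l1 m1 l2 m2 ^ (y.1 - y.2) +
    cc l1 m1 l2 m2 *
      (Rone l1 m1 ^ y.1 - rr l1 m1 l2 m2 ^ (y.1 - y.2) * Rone l1 m1 ^ y.2)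

structure Ctx (l1 m1 l2 m2 : ℝ) : Prop where
  hl1 : 0 < l1
  hm1 : 0 < m1
  hl2 : 0 < l2
  hm2 : 0 < m2
  hsum : l1 + l2 + m1 + m2 = 1
  hp1 : l1 / m1 < 1
  hp2 : l2 / m2 < 1
  hord1 : l2 / m2 ≤ (l1 + l2) / (m1 + m2)
  hneq : l1 / m1 ≠ l2 / m2
  hharm : l1 / m1 * (l2 / m2) = ((l1 + l2) / (m1 + m2)) ^ 2

variable {l1 m1 l2 m2 : ℝ}

lemma Ctx.l1_lt (hc : Ctx l1 m1 l2 m2) : l1 < m1 := by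
  have h := hc.hp1; have h2 := hc.hm1; rw [div_lt_one h2] at h; exact h

lemma Ctx.l2_lt (hc : Ctx l1 m1 l2 m2) : l2 < m2 := by
  have h := hc.hp2; have h2 := hc.hm2; rw [div_lt_one h2] at h; exact h

lemma Ctx.rr_pos (hc : Ctx l1 m1 l2 m2) : 0 < rr l1 m1 l2 m2 := by
  have := hc.hl1; have := hc.hl2; have := hc.hm1; have := hc.hm2
  exact div_pos (by linarith) (by linarith)

lemma Ctx.rr_lt_one (hc : Ctx l1 m1 l2 m2) : rr l1 m1 l2 m2 < 1 := by
  have h1 := hc.l1_lt; have h2 := hc.l2_lt; have := hc.hm1; have := hc.hm2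
  rw [rr, div_lt_one (by linarith)]; linarith

lemma Ctx.R1_pos (hc : Ctx l1 m1 l2 m2) : 0 < Rone l1 m1 :=
  div_pos hc.hl1 hc.hm1

lemma Ctx.R1_lt_one (hc : Ctx l1 m1 l2 m2) : Rone l1 m1 < 1 := hc.hp1

lemma Ctx.R2_pos (hc : Ctx l1 m1 l2 m2) : 0 < Rtwo l2 m2 :=
  div_pos hc.hl2 hc.hm2

lemma Ctx.harm' (hc : Ctx l1 m1 l2 m2) :
    Rone l1 m1 * Rtwo l2 m2 = rr l1 m1 l2 m2 ^ 2 := hc.hharm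

lemma Ctx.rr_ne (hc : Ctx l1 m1 l2 m2) : rr l1 m1 l2 m2 ≠ 0 := ne_of_gt hc.rr_pos
lemma Ctx.R1_ne (hc : Ctx l1 m1 l2 m2) : Rone l1 m1 ≠ 0 := ne_of_gt hc.R1_pos

lemma Ctx.R2_lt_rr (hc : Ctx l1 m1 l2 m2) : Rtwo l2 m2 < rr l1 m1 l2 m2 := by
  rcases lt_or_eq_of_le hc.hord1 with h | h
  · exact h
  · exfalso
    have hRT : Rtwo l2 m2 = rr l1 m1 l2 m2 := h
    have h2 := hc.harm'
    rw [hRT] at h2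
    have hone : Rone l1 m1 = rr l1 m1 l2 m2 :=
      mul_right_cancel₀ hc.rr_ne (by rw [h2]; ring)
    exact hc.hneq (hone.trans hRT.symm)

lemma Ctx.rr_lt_R1 (hc : Ctx l1 m1 l2 m2) : rr l1 m1 l2 m2 < Rone l1 m1 := by
  have h := hc.harm'
  have h2 := hc.R2_lt_rr
  have h3 := hc.rr_pos
  have h4 := hc.R1_pos
  nlinarith

lemma Ctx.cc_pos (hc : Ctx l1 m1 l2 m2) : 0 < cc l1 m1 l2 m2 := by
  have := hc.rr_pos; have := hc.rr_lt_one; have := hc.R2_lt_rr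
  exact div_pos (by nlinarith) (by linarith)

lemma Ctx.hrr (hc : Ctx l1 m1 l2 m2) :
    l1 + l2 = rr l1 m1 l2 m2 * (m1 + m2) := by
  have := hc.hm1; have := hc.hm2
  rw [rr, div_mul_cancel₀ _ (by positivity : m1 + m2 ≠ 0)]

lemma Ctx.hR1' (hc : Ctx l1 m1 l2 m2) : l1 = Rone l1 m1 * m1 := by
  rw [Rone, div_mul_cancel₀ _ (ne_of_gt hc.hm1)]

lemma Ctx.hR2' (hc : Ctx l1 m1 l2 m2) : l2 = Rtwo l2 m2 * m2 := by
  rw [Rtwo, div_mul_cancel₀ _ (ne_of_gt hc.hm2)]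

lemma Ctx.hinvr (hc : Ctx l1 m1 l2 m2) :
    rr l1 m1 l2 m2 * (rr l1 m1 l2 m2)⁻¹ = 1 := mul_inv_cancel₀ hc.rr_ne

lemma Ctx.hinvR (hc : Ctx l1 m1 l2 m2) :
    Rone l1 m1 * (Rone l1 m1)⁻¹ = 1 := mul_inv_cancel₀ hc.R1_ne

lemma Ctx.key (hc : Ctx l1 m1 l2 m2) :
    rr l1 m1 l2 m2 * (Rone l1 m1)⁻¹ = Rtwo l2 m2 * (rr l1 m1 l2 m2)⁻¹ := by
  have hH := hc.harm'
  have h1 := hc.hinvr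
  have h2 := hc.hinvR
  linear_combination (-((Rone l1 m1)⁻¹ * (rr l1 m1 l2 m2)⁻¹)) * hH -
    (rr l1 m1 l2 m2 * (Rone l1 m1)⁻¹) * h1 +
    (Rtwo l2 m2 * (rr l1 m1 l2 m2)⁻¹) * h2

lemma Ctx.hcc (hc : Ctx l1 m1 l2 m2) :
    cc l1 m1 l2 m2 * (rr l1 m1 l2 m2 - Rtwo l2 m2) =
      rr l1 m1 l2 m2 * (1 - rr l1 m1 l2 m2) := by
  rw [cc, div_mul_cancel₀ _ (ne_of_gt (by linarith [hc.R2_lt_rr] :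
    (0:ℝ) < rr l1 m1 l2 m2 - Rtwo l2 m2))]

lemma Ctx.idA (hc : Ctx l1 m1 l2 m2) :
    l1 * (rr l1 m1 l2 m2)⁻¹ + m1 * rr l1 m1 l2 m2 + l2 * (rr l1 m1 l2 m2)⁻¹ +
      m2 * rr l1 m1 l2 m2 = 1 := by
  have hrr := hc.hrr
  have h1 := hc.hinvr
  have hs := hc.hsum
  have e1 : l1 * (rr l1 m1 l2 m2)⁻¹ + l2 * (rr l1 m1 l2 m2)⁻¹ = m1 + m2 := by
    linear_combination (rr l1 m1 l2 m2)⁻¹ * hrr + (m1 + m2) * h1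
  have e2 : m1 * rr l1 m1 l2 m2 + m2 * rr l1 m1 l2 m2 = l1 + l2 := by
    linear_combination -hrr
  linear_combination e1 + e2 + hs

lemma Ctx.idB (hc : Ctx l1 m1 l2 m2) :
    l1 * (Rone l1 m1)⁻¹ + m1 * Rone l1 m1 + l2 + m2 = 1 := by
  have hR1 := hc.hR1'
  have h2 := hc.hinvR
  have hs := hc.hsum
  have e1 : l1 * (Rone l1 m1)⁻¹ = m1 := by
    linear_combination m1 * h2 + (Rone l1 m1)⁻¹ * hR1
  have e2 : m1 * Rone l1 m1 = l1 := by linear_combination -hR1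
  linear_combination e1 + e2 + hs

lemma Ctx.idC (hc : Ctx l1 m1 l2 m2) :
    l1 * (rr l1 m1 l2 m2)⁻¹ + m1 * rr l1 m1 l2 m2 +
      l2 * (Rone l1 m1 * (rr l1 m1 l2 m2)⁻¹) +
      m2 * (rr l1 m1 l2 m2 * (Rone l1 m1)⁻¹) = 1 := by
  have hH := hc.harm'
  have hR2 := hc.hR2'
  have h1 := hc.hinvr
  have hkey := hc.key
  have e1 : l2 * (Rone l1 m1 * (rr l1 m1 l2 m2)⁻¹) = m2 * rr l1 m1 l2 m2 := by
    linear_combination (Rone l1 m1 * (rr l1 m1 l2 m2)⁻¹) * hR2 +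
      (m2 * (rr l1 m1 l2 m2)⁻¹) * hH + (m2 * rr l1 m1 l2 m2) * h1
  have e2 : m2 * (rr l1 m1 l2 m2 * (Rone l1 m1)⁻¹) =
      l2 * (rr l1 m1 l2 m2)⁻¹ := by
    linear_combination m2 * hkey - (rr l1 m1 l2 m2)⁻¹ * hR2
  rw [e1, e2]
  have := hc.idA
  linarith

lemma Ctx.idD (hc : Ctx l1 m1 l2 m2) :
    rr l1 m1 l2 m2 - cc l1 m1 l2 m2 * (rr l1 m1 l2 m2 * (Rone l1 m1)⁻¹) =
      1 - cc l1 m1 l2 m2 := by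
  have hkey := hc.key
  have hcc := hc.hcc
  have h1 := hc.hinvr
  linear_combination (-cc l1 m1 l2 m2) * hkey + (rr l1 m1 l2 m2)⁻¹ * hcc +
    (1 - rr l1 m1 l2 m2 - cc l1 m1 l2 m2) * h1


-- ===== harmonicity =====

lemma zpow_le_zpow_base {x y : ℝ} (hx : 0 < x) (hxy : x ≤ y) {d : ℤ} (hd : 0 ≤ d) :
    x ^ d ≤ y ^ d := by
  obtain ⟨n, rfl⟩ : ∃ n : ℕ, d = (n : ℤ) := ⟨d.toNat, (Int.toNat_of_nonneg hd).symm⟩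
  rw [zpow_natCast, zpow_natCast]
  exact pow_le_pow_left₀ hx.le hxy n

lemma zpow_le_one' {x : ℝ} (hx : 0 < x) (hx1 : x ≤ 1) {d : ℤ} (hd : 0 ≤ d) :
    x ^ d ≤ 1 := by
  obtain ⟨n, rfl⟩ : ∃ n : ℕ, d = (n : ℤ) := ⟨d.toNat, (Int.toNat_of_nonneg hd).symm⟩
  rw [zpow_natCast]
  exact pow_le_one₀ hx.le hx1

lemma Ctx.harmonic_int (hc : Ctx l1 m1 l2 m2) (a b : ℤ) :
    l1 * hfun l1 m1 l2 m2 (a - 1, b) + m1 * hfun l1 m1 l2 m2 (a + 1, b) +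
      l2 * hfun l1 m1 l2 m2 (a, b + 1) + m2 * hfun l1 m1 l2 m2 (a, b - 1) =
      hfun l1 m1 l2 m2 (a, b) := by
  have hr := hc.rr_ne
  have hR := hc.R1_ne
  simp only [hfun]
  have E1 : a - 1 - b = a - b - 1 := by ring
  have E2 : a + 1 - b = a - b + 1 := by ring
  have E3 : a - (b + 1) = a - b - 1 := by ring
  have E4 : a - (b - 1) = a - b + 1 := by ring
  simp only [E1, E2, E3, E4, zpow_sub_one₀ hr, zpow_add_one₀ hr, zpow_sub_one₀ hR,
    zpow_add_one₀ hR]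
  linear_combination (rr l1 m1 l2 m2 ^ (a - b)) * hc.idA +
    (cc l1 m1 l2 m2 * Rone l1 m1 ^ a) * hc.idB -
    (cc l1 m1 l2 m2 * rr l1 m1 l2 m2 ^ (a - b) * Rone l1 m1 ^ b) * hc.idC

lemma Ctx.hflat (hc : Ctx l1 m1 l2 m2) (a : ℤ) :
    hfun l1 m1 l2 m2 (a, -1) = hfun l1 m1 l2 m2 (a, 0) := by
  have hr := hc.rr_ne
  simp only [hfun]
  have E1 : a - (-1 : ℤ) = a + 1 := by ring
  have E2 : a - (0 : ℤ) = a := by ring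
  simp only [E1, E2, zpow_add_one₀ hr, zpow_neg_one, zpow_zero]
  linear_combination (rr l1 m1 l2 m2 ^ a) * hc.idD

lemma sum_MV (f : ℤ × ℤ → ℝ) :
    ∑ v ∈ MV, f v = f (1, 0) + f (-1, 0) + f (0, 1) + f (0, -1) := by
  rw [MV, Finset.sum_insert (by decide), Finset.sum_insert (by decide),
    Finset.sum_insert (by decide), Finset.sum_singleton]
  ring

lemma pw_a : pw l1 m1 l2 m2 (1, 0) = l1 := by norm_num [pw]
lemma pw_b : pw l1 m1 l2 m2 (-1, 0) = m1 := by norm_num [pw]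
lemma pw_c : pw l1 m1 l2 m2 (0, 1) = l2 := by norm_num [pw]
lemma pw_d : pw l1 m1 l2 m2 (0, -1) = m2 := by norm_num [pw]

lemma ystep_a (y : ℤ × ℤ) (h : 0 ≤ y.2) : ystep y (1, 0) = (y.1 - 1, y.2) := by
  have h2 : (0:ℤ) ≤ (y + (-1, 0)).2 := by simpa using h
  simp only [ystep, stepY]
  rw [if_pos (by simpa using h2)]
  ext <;> simp <;> ring

lemma ystep_b (y : ℤ × ℤ) (h : 0 ≤ y.2) : ystep y (-1, 0) = (y.1 + 1, y.2) := by
  simp only [ystep, stepY]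
  rw [if_pos (by simpa using h)]
  ext <;> simp

lemma ystep_c (y : ℤ × ℤ) (h : 0 ≤ y.2) : ystep y (0, 1) = (y.1, y.2 + 1) := by
  simp only [ystep, stepY]
  rw [if_pos (by simp; omega)]
  ext <;> simp

lemma ystep_d (y : ℤ × ℤ) (h : 1 ≤ y.2) : ystep y (0, -1) = (y.1, y.2 - 1) := by
  simp only [ystep, stepY]
  rw [if_pos (by simp; omega)]
  ext <;> simp <;> ring

lemma ystep_d0 (y : ℤ × ℤ) (h : y.2 = 0) : ystep y (0, -1) = y := by
  simp only [ystep, stepY]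
  rw [if_neg (by simp; omega)]

lemma Ctx.hfun_diag (hc : Ctx l1 m1 l2 m2) {y : ℤ × ℤ} (h : y.1 = y.2) :
    hfun l1 m1 l2 m2 y = 1 := by
  simp [hfun, h]

lemma Ctx.harmonic_sum (hc : Ctx l1 m1 l2 m2) {a b : ℤ} (h2 : 0 ≤ b)
    (hne : a ≠ b) :
    ∑ v ∈ MV, pw l1 m1 l2 m2 v * hfun l1 m1 l2 m2 (ystep (a, b) v) =
      hfun l1 m1 l2 m2 (a, b) := by
  have h2' : (0:ℤ) ≤ ((a, b) : ℤ × ℤ).2 := h2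
  rw [sum_MV (fun v => pw l1 m1 l2 m2 v * hfun l1 m1 l2 m2 (ystep (a, b) v))]
  simp only [pw_a, pw_b, pw_c, pw_d, ystep_a (a, b) h2', ystep_b (a, b) h2',
    ystep_c (a, b) h2']
  rcases eq_or_lt_of_le h2 with h0 | h0
  · have hb : b = 0 := h0.symm
    subst hb
    rw [ystep_d0 (a, 0) rfl]
    have hint := hc.harmonic_int a 0
    have hfl := hc.hflat a
    norm_num at hint ⊢
    linear_combination hint - m2 * hfl
  · rw [ystep_d (a, b) (by omega)]
    have hint := hc.harmonic_int a b
    exact hint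

lemma Ctx.hfun_nonneg (hc : Ctx l1 m1 l2 m2) {y : ℤ × ℤ} (h2 : 0 ≤ y.2)
    (hle : y.2 ≤ y.1) : 0 ≤ hfun l1 m1 l2 m2 y := by
  have hr := hc.rr_pos
  have hR := hc.R1_pos
  have hd : 0 ≤ y.1 - y.2 := by omega
  have hB := zpow_add₀ hc.R1_ne y.2 (y.1 - y.2)
  rw [show y.2 + (y.1 - y.2) = y.1 by ring] at hB
  rw [hfun, hB]
  have hbase : rr l1 m1 l2 m2 ^ (y.1 - y.2) ≤ Rone l1 m1 ^ (y.1 - y.2) :=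
    zpow_le_zpow_base hr hc.rr_lt_R1.le hd
  have f1 : 0 ≤ Rone l1 m1 ^ y.2 * Rone l1 m1 ^ (y.1 - y.2) -
      rr l1 m1 l2 m2 ^ (y.1 - y.2) * Rone l1 m1 ^ y.2 := by
    nlinarith [zpow_pos hR y.2, sub_nonneg.2 hbase]
  nlinarith [zpow_pos hr (y.1 - y.2), mul_nonneg hc.cc_pos.le f1]

lemma Ctx.hfun_le (hc : Ctx l1 m1 l2 m2) {y : ℤ × ℤ} (h2 : 0 ≤ y.2)
    (hle : y.2 ≤ y.1) :
    hfun l1 m1 l2 m2 y ≤ (1 + cc l1 m1 l2 m2) * Rone l1 m1 ^ (y.1 - y.2) := by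
  have hr := hc.rr_pos
  have hR := hc.R1_pos
  have hd : 0 ≤ y.1 - y.2 := by omega
  have hB := zpow_add₀ hc.R1_ne y.2 (y.1 - y.2)
  rw [show y.2 + (y.1 - y.2) = y.1 by ring] at hB
  rw [hfun, hB]
  have hbase : rr l1 m1 l2 m2 ^ (y.1 - y.2) ≤ Rone l1 m1 ^ (y.1 - y.2) :=
    zpow_le_zpow_base hr hc.rr_lt_R1.le hd
  have hE1 : Rone l1 m1 ^ y.2 ≤ 1 := zpow_le_one' hR hc.R1_lt_one.le h2
  have hE0 : 0 < Rone l1 m1 ^ y.2 := zpow_pos hR y.2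
  have T : 0 ≤ cc l1 m1 l2 m2 * (1 - Rone l1 m1 ^ y.2) *
      (Rone l1 m1 ^ (y.1 - y.2) - rr l1 m1 l2 m2 ^ (y.1 - y.2)) := by
    apply mul_nonneg (mul_nonneg hc.cc_pos.le (by linarith)) (by linarith)
  nlinarith [mul_nonneg hc.cc_pos.le (zpow_pos hr (y.1 - y.2)).le]

-- ===== DP operators =====

def oneOff : ℤ × ℤ → ℝ := fun y => if y.1 = y.2 then 0 else 1

def indM (M : ℕ) : ℤ × ℤ → ℝ := fun y =>
  if y.1 = y.2 then 0 else if y.1 - y.2 ≤ (M : ℤ) then 1 else 0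

def hOff (l1 m1 l2 m2 : ℝ) : ℤ × ℤ → ℝ := fun y =>
  if y.1 = y.2 then 0 else hfun l1 m1 l2 m2 y

def Top (l1 m1 l2 m2 : ℝ) (f : ℤ × ℤ → ℝ) : ℤ × ℤ → ℝ := fun y =>
  if y.1 = y.2 then 0 else ∑ v ∈ MV, pw l1 m1 l2 m2 v * f (ystep y v)

def vN (l1 m1 l2 m2 : ℝ) : ℕ → ℤ × ℤ → ℝ
  | 0 => fun y => if y.1 = y.2 then 1 else 0
  | n+1 => fun y => if y.1 = y.2 then 1 else
      ∑ v ∈ MV, pw l1 m1 l2 m2 v * vN l1 m1 l2 m2 n (ystep y v)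

def Good (y : ℤ × ℤ) : Prop := 0 ≤ y.2 ∧ y.2 ≤ y.1

lemma Ctx.pw_nonneg (hc : Ctx l1 m1 l2 m2) (v : ℤ × ℤ) : 0 ≤ pw l1 m1 l2 m2 v := by
  have := hc.hl1; have := hc.hm1; have := hc.hl2; have := hc.hm2
  rw [pw]; split_ifs <;> linarith

lemma Ctx.sum_pw (hc : Ctx l1 m1 l2 m2) : ∑ v ∈ MV, pw l1 m1 l2 m2 v = 1 := by
  rw [sum_MV (pw l1 m1 l2 m2), pw_a, pw_b, pw_c, pw_d]
  linarith [hc.hsum]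

lemma mem_MV_cases {v : ℤ × ℤ} (h : v ∈ MV) :
    v = (1, 0) ∨ v = (-1, 0) ∨ v = (0, 1) ∨ v = (0, -1) := by
  rw [MV] at h; simpa using h

lemma good_step {y v : ℤ × ℤ} (hy : Good y) (hne : y.1 ≠ y.2) (hv : v ∈ MV) :
    Good (ystep y v) := by
  obtain ⟨h2, hle⟩ := hy
  rcases mem_MV_cases hv with rfl | rfl | rfl | rfl
  · rw [ystep_a y h2]; exact ⟨h2, by omega⟩
  · rw [ystep_b y h2]; exact ⟨h2, by omega⟩
  · rw [ystep_c y h2]; exact ⟨by omega, by omega⟩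
  · rcases eq_or_lt_of_le h2 with h0 | h0
    · rw [ystep_d0 y h0.symm]; exact ⟨h2, hle⟩
    · rw [ystep_d y (by omega)]; exact ⟨by omega, by omega⟩

lemma Ctx.Top_mono (hc : Ctx l1 m1 l2 m2) {f g : ℤ × ℤ → ℝ}
    (h : ∀ z, Good z → f z ≤ g z) {y : ℤ × ℤ} (hy : Good y) :
    Top l1 m1 l2 m2 f y ≤ Top l1 m1 l2 m2 g y := by
  rw [Top, Top]
  split_ifs with hd
  · exact le_refl _
  · exact Finset.sum_le_sum fun v hv =>
      mul_le_mul_of_nonneg_left (h _ (good_step hy hd hv)) (hc.pw_nonneg v)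

lemma Ctx.Titer_mono (hc : Ctx l1 m1 l2 m2) (n : ℕ) {f g : ℤ × ℤ → ℝ}
    (h : ∀ z, Good z → f z ≤ g z) :
    ∀ y, Good y → (Top l1 m1 l2 m2)^[n] f y ≤ (Top l1 m1 l2 m2)^[n] g y := by
  induction n with
  | zero => exact h
  | succ n ih =>
    intro y hy
    rw [Function.iterate_succ_apply', Function.iterate_succ_apply']
    exact hc.Top_mono (fun z hz => ih z hz) hy

lemma Top_zero : Top l1 m1 l2 m2 (fun _ => 0) = fun _ => 0 := by
  funext y; rw [Top]; split_ifs <;> simp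

lemma Titer_zero (n : ℕ) : (Top l1 m1 l2 m2)^[n] (fun _ => 0) = fun _ => 0 :=
  Function.iterate_fixed Top_zero n

lemma Ctx.Titer_nonneg (hc : Ctx l1 m1 l2 m2) (n : ℕ) {f : ℤ × ℤ → ℝ}
    (h : ∀ z, Good z → 0 ≤ f z) {y : ℤ × ℤ} (hy : Good y) :
    0 ≤ (Top l1 m1 l2 m2)^[n] f y := by
  have := hc.Titer_mono n (f := fun _ => 0) (g := f) (fun z hz => h z hz) y hy
  rwa [Titer_zero] at this

lemma Top_add_smul (f g : ℤ × ℤ → ℝ) (a : ℝ) :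
    Top l1 m1 l2 m2 (fun z => f z + a * g z) =
      fun y => Top l1 m1 l2 m2 f y + a * Top l1 m1 l2 m2 g y := by
  funext y
  rw [Top, Top, Top]
  split_ifs with hd
  · ring
  · rw [Finset.mul_sum, ← Finset.sum_add_distrib]
    exact Finset.sum_congr rfl fun v _ => by ring

lemma Titer_add_smul (n : ℕ) (f g : ℤ × ℤ → ℝ) (a : ℝ) :
    (Top l1 m1 l2 m2)^[n] (fun z => f z + a * g z) =
      fun y => (Top l1 m1 l2 m2)^[n] f y + a * (Top l1 m1 l2 m2)^[n] g y := by
  induction n with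
  | zero => simp
  | succ n ih =>
    rw [Function.iterate_succ_apply', ih, Top_add_smul]
    funext y
    rw [Function.iterate_succ_apply', Function.iterate_succ_apply']

lemma Titer_smul (n : ℕ) (g : ℤ × ℤ → ℝ) (a : ℝ) (y : ℤ × ℤ) :
    (Top l1 m1 l2 m2)^[n] (fun z => a * g z) y = a * (Top l1 m1 l2 m2)^[n] g y := by
  have h := Titer_add_smul (l1 := l1) (m1 := m1) (l2 := l2) (m2 := m2) n
    (fun _ => 0) g a
  have h2 : (fun z : ℤ × ℤ => (0:ℝ) + a * g z) = fun z => a * g z := by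
    funext z; ring
  rw [h2] at h
  rw [h, Titer_zero]
  simp

lemma Ctx.vN_plus (hc : Ctx l1 m1 l2 m2) :
    ∀ n y, Good y →
      vN l1 m1 l2 m2 n y + (Top l1 m1 l2 m2)^[n] (hOff l1 m1 l2 m2) y =
        hfun l1 m1 l2 m2 y := by
  intro n
  induction n with
  | zero =>
    intro y hy
    simp only [vN, Function.iterate_zero_apply, hOff]
    split_ifs with hd
    · rw [hc.hfun_diag hd]; ring
    · ring
  | succ n ih =>
    intro y hy
    rw [Function.iterate_succ_apply']
    simp only [vN, Top]
    split_ifs with hd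
    · rw [hc.hfun_diag hd]; ring
    · rw [← Finset.sum_add_distrib]
      have : ∀ v ∈ MV,
          pw l1 m1 l2 m2 v * vN l1 m1 l2 m2 n (ystep y v) +
            pw l1 m1 l2 m2 v * (Top l1 m1 l2 m2)^[n] (hOff l1 m1 l2 m2) (ystep y v) =
          pw l1 m1 l2 m2 v * hfun l1 m1 l2 m2 (ystep y v) := by
        intro v hv
        rw [← mul_add, ih _ (good_step hy hd hv)]
      rw [Finset.sum_congr rfl this]
      have hs := hc.harmonic_sum (a := y.1) (b := y.2) hy.1 hd
      simpa using hs

lemma Ctx.Top_le_one (hc : Ctx l1 m1 l2 m2) {f : ℤ × ℤ → ℝ}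
    (hf : ∀ z, Good z → f z ≤ 1) {y : ℤ × ℤ} (hy : Good y) :
    Top l1 m1 l2 m2 f y ≤ 1 := by
  rw [Top]
  split_ifs with hd
  · norm_num
  · calc ∑ v ∈ MV, pw l1 m1 l2 m2 v * f (ystep y v)
        ≤ ∑ v ∈ MV, pw l1 m1 l2 m2 v * 1 :=
          Finset.sum_le_sum fun v hv =>
            mul_le_mul_of_nonneg_left (hf _ (good_step hy hd hv)) (hc.pw_nonneg v)
      _ = 1 := by simp only [mul_one]; exact hc.sum_pw

lemma Ctx.G_le_one (hc : Ctx l1 m1 l2 m2) (n : ℕ) {y : ℤ × ℤ} (hy : Good y) :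
    (Top l1 m1 l2 m2)^[n] oneOff y ≤ 1 := by
  induction n generalizing y with
  | zero => rw [Function.iterate_zero_apply, oneOff]; split_ifs <;> norm_num
  | succ n ih =>
    rw [Function.iterate_succ_apply']
    exact hc.Top_le_one (fun z hz => ih hz) hy

lemma Ctx.G_nonneg (hc : Ctx l1 m1 l2 m2) (n : ℕ) {y : ℤ × ℤ} (hy : Good y) :
    0 ≤ (Top l1 m1 l2 m2)^[n] oneOff y :=
  hc.Titer_nonneg n (fun z _ => by rw [oneOff]; split_ifs <;> norm_num) hy

lemma Ctx.G_antitone (hc : Ctx l1 m1 l2 m2) (n : ℕ) {y : ℤ × ℤ} (hy : Good y) :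
    (Top l1 m1 l2 m2)^[n+1] oneOff y ≤ (Top l1 m1 l2 m2)^[n] oneOff y := by
  rw [Function.iterate_succ_apply]
  apply hc.Titer_mono n (f := Top l1 m1 l2 m2 oneOff) (g := oneOff) _ y hy
  intro z hz
  rw [oneOff]
  split_ifs with hd
  · rw [Top, if_pos hd]
  · exact hc.Top_le_one (fun w _ => by rw [oneOff]; split_ifs <;> norm_num) hz

-- ===== transience bound and convergence =====

lemma Ctx.l1_le_one (hc : Ctx l1 m1 l2 m2) : l1 ≤ 1 := by
  have := hc.hl2; have := hc.hm1; have := hc.hm2; linarith [hc.hsum]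

lemma Ctx.hitL (hc : Ctx l1 m1 l2 m2) :
    ∀ m : ℕ, ∀ y : ℤ × ℤ, Good y → y.1 - y.2 ≤ (m : ℤ) →
      (Top l1 m1 l2 m2)^[m] oneOff y ≤ 1 - l1 ^ m := by
  intro m
  induction m with
  | zero =>
    intro y hy hle
    obtain ⟨hg1, hg2⟩ := hy
    have hd : y.1 = y.2 := by omega
    simp [oneOff, hd]
  | succ m ih =>
    intro y hy hle
    rw [Function.iterate_succ_apply']
    by_cases hd : y.1 = y.2
    · rw [Top, if_pos hd]
      have : l1 ^ (m + 1) ≤ 1 := pow_le_one₀ hc.hl1.le hc.l1_le_one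
      linarith
    · rw [Top, if_neg hd,
        sum_MV (fun v => pw l1 m1 l2 m2 v *
          (Top l1 m1 l2 m2)^[m] oneOff (ystep y v))]
      simp only [pw_a, pw_b, pw_c, pw_d]
      have g1 := good_step hy hd (show ((1:ℤ), (0:ℤ)) ∈ MV by decide)
      have g2 := good_step hy hd (show ((-1:ℤ), (0:ℤ)) ∈ MV by decide)
      have g3 := good_step hy hd (show ((0:ℤ), (1:ℤ)) ∈ MV by decide)
      have g4 := good_step hy hd (show ((0:ℤ), (-1:ℤ)) ∈ MV by decide)
      have hA : (Top l1 m1 l2 m2)^[m] oneOff (ystep y (1, 0)) ≤ 1 - l1 ^ m := by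
        apply ih _ g1
        have h2 := hy.1
        have h3 := hy.2
        have hgoal : (y.1 - 1 : ℤ) - y.2 ≤ (m : ℤ) := by push_cast at hle ⊢; omega
        rw [ystep_a y hy.1]
        exact hgoal
      have hB : (Top l1 m1 l2 m2)^[m] oneOff (ystep y (-1, 0)) ≤ 1 := hc.G_le_one m g2
      have hC : (Top l1 m1 l2 m2)^[m] oneOff (ystep y (0, 1)) ≤ 1 := hc.G_le_one m g3
      have hD : (Top l1 m1 l2 m2)^[m] oneOff (ystep y (0, -1)) ≤ 1 := hc.G_le_one m g4
      have t1 : l1 * (Top l1 m1 l2 m2)^[m] oneOff (ystep y (1, 0)) ≤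
          l1 * (1 - l1 ^ m) := mul_le_mul_of_nonneg_left hA hc.hl1.le
      have t2 : m1 * (Top l1 m1 l2 m2)^[m] oneOff (ystep y (-1, 0)) ≤ m1 :=
        by nlinarith [hc.hm1]
      have t3 : l2 * (Top l1 m1 l2 m2)^[m] oneOff (ystep y (0, 1)) ≤ l2 :=
        by nlinarith [hc.hl2]
      have t4 : m2 * (Top l1 m1 l2 m2)^[m] oneOff (ystep y (0, -1)) ≤ m2 :=
        by nlinarith [hc.hm2]
      have e : l1 * (1 - l1 ^ m) + m1 + l2 + m2 = 1 - l1 ^ (m + 1) := by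
        linear_combination hc.hsum
      linarith

lemma indM_nonneg (M : ℕ) (z : ℤ × ℤ) : 0 ≤ indM M z := by
  rw [indM]; split_ifs <;> norm_num

lemma Ctx.GM_le (hc : Ctx l1 m1 l2 m2) (M : ℕ) :
    ∀ z, Good z → (Top l1 m1 l2 m2)^[M] oneOff z ≤
      oneOff z - l1 ^ M * indM M z := by
  intro z hz
  by_cases hd : z.1 = z.2
  · have h0 : (Top l1 m1 l2 m2)^[M] oneOff z ≤ 0 := by
      cases M with
      | zero => simp [oneOff, hd]
      | succ M => rw [Function.iterate_succ_apply', Top, if_pos hd]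
    rw [oneOff, if_pos hd, indM, if_pos hd]
    simpa using h0
  · rw [oneOff, if_neg hd, indM, if_neg hd]
    split_ifs with hM
    · have := hc.hitL M z hz hM
      simpa using this
    · simpa using hc.G_le_one M hz

lemma Ctx.G_drop (hc : Ctx l1 m1 l2 m2) (M n : ℕ) {y : ℤ × ℤ} (hy : Good y) :
    (Top l1 m1 l2 m2)^[n + M] oneOff y ≤
      (Top l1 m1 l2 m2)^[n] oneOff y -
        l1 ^ M * (Top l1 m1 l2 m2)^[n] (indM M) y := by
  rw [Function.iterate_add_apply]
  have h1 := hc.Titer_mono n (f := (Top l1 m1 l2 m2)^[M] oneOff)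
    (g := fun z => oneOff z + -(l1 ^ M) * indM M z) ?_ y hy
  · rw [Titer_add_smul] at h1
    have h1' : (Top l1 m1 l2 m2)^[n] ((Top l1 m1 l2 m2)^[M] oneOff) y ≤
        (Top l1 m1 l2 m2)^[n] oneOff y +
          -l1 ^ M * (Top l1 m1 l2 m2)^[n] (indM M) y := h1
    linarith
  · intro z hz
    have h := hc.GM_le M z hz
    show (Top l1 m1 l2 m2)^[M] oneOff z ≤ oneOff z + -l1 ^ M * indM M z
    linarith

lemma Ctx.hOff_le (hc : Ctx l1 m1 l2 m2) (M : ℕ) :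
    ∀ z, Good z → hOff l1 m1 l2 m2 z ≤
      (1 + cc l1 m1 l2 m2) * (Rone l1 m1 ^ M * oneOff z + indM M z) := by
  intro z hz
  by_cases hd : z.1 = z.2
  · simp [hOff, oneOff, indM, hd]
  · rw [hOff, if_neg hd, oneOff, if_neg hd, indM, if_neg hd]
    have h1 := hc.hfun_le hz.1 hz.2
    have hcpos : (0:ℝ) < 1 + cc l1 m1 l2 m2 := by linarith [hc.cc_pos]
    have hRM : (0:ℝ) ≤ Rone l1 m1 ^ M := pow_nonneg hc.R1_pos.le M
    have hz1 := hz.1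
    have hz2 := hz.2
    split_ifs with hM
    · have h2 : Rone l1 m1 ^ (z.1 - z.2) ≤ 1 :=
        zpow_le_one' hc.R1_pos hc.R1_lt_one.le (by omega)
      nlinarith
    · have h2 : Rone l1 m1 ^ (z.1 - z.2) ≤ Rone l1 m1 ^ ((M : ℤ)) :=
        zpow_le_zpow_right_of_le_one₀ hc.R1_pos hc.R1_lt_one.le (by omega)
      rw [zpow_natCast] at h2
      nlinarith

lemma Ctx.wN_le (hc : Ctx l1 m1 l2 m2) (M n : ℕ) {y : ℤ × ℤ} (hy : Good y) :
    (Top l1 m1 l2 m2)^[n] (hOff l1 m1 l2 m2) y ≤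
      (1 + cc l1 m1 l2 m2) *
        (Rone l1 m1 ^ M * (Top l1 m1 l2 m2)^[n] oneOff y +
          (Top l1 m1 l2 m2)^[n] (indM M) y) := by
  have h1 := hc.Titer_mono n (f := hOff l1 m1 l2 m2)
    (g := fun z => (1 + cc l1 m1 l2 m2) * (Rone l1 m1 ^ M * oneOff z + indM M z))
    (hc.hOff_le M) y hy
  have h2 : (Top l1 m1 l2 m2)^[n]
      (fun z => (1 + cc l1 m1 l2 m2) * (Rone l1 m1 ^ M * oneOff z + indM M z)) y =
      (1 + cc l1 m1 l2 m2) * ((Top l1 m1 l2 m2)^[n]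
        (fun z => Rone l1 m1 ^ M * oneOff z + indM M z) y) :=
    Titer_smul n _ _ y
  have h3 : (Top l1 m1 l2 m2)^[n]
      (fun z => Rone l1 m1 ^ M * oneOff z + indM M z) y =
      Rone l1 m1 ^ M * (Top l1 m1 l2 m2)^[n] oneOff y +
        (Top l1 m1 l2 m2)^[n] (indM M) y := by
    have hcg : (fun z : ℤ × ℤ => Rone l1 m1 ^ M * oneOff z + indM M z) =
        (fun z : ℤ × ℤ => indM M z + Rone l1 m1 ^ M * oneOff z) := by
      funext z; ring
    rw [hcg, Titer_add_smul n (indM M) oneOff (Rone l1 m1 ^ M)]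
    ring
  rw [h2, h3] at h1
  exact h1

lemma Ctx.hOff_nonneg (hc : Ctx l1 m1 l2 m2) :
    ∀ z, Good z → 0 ≤ hOff l1 m1 l2 m2 z := by
  intro z hz
  rw [hOff]
  split_ifs with hd
  · exact le_refl _
  · exact hc.hfun_nonneg hz.1 hz.2

lemma Ctx.w_tendsto (hc : Ctx l1 m1 l2 m2) {y : ℤ × ℤ} (hy : Good y) :
    Filter.Tendsto (fun n => (Top l1 m1 l2 m2)^[n] (hOff l1 m1 l2 m2) y)
      Filter.atTop (nhds 0) := by
  set a : ℕ → ℝ := fun n => (Top l1 m1 l2 m2)^[n] oneOff y with ha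
  have hanti : Antitone a := antitone_nat_of_succ_le fun n => hc.G_antitone n hy
  have hbdd : BddBelow (Set.range a) := by
    refine ⟨0, ?_⟩
    rintro x ⟨n, rfl⟩
    exact hc.G_nonneg n hy
  have hconv : Filter.Tendsto a Filter.atTop (nhds (⨅ n, a n)) :=
    tendsto_atTop_ciInf hanti hbdd
  have hSlim : ∀ M : ℕ,
      Filter.Tendsto (fun n => (Top l1 m1 l2 m2)^[n] (indM M) y)
        Filter.atTop (nhds 0) := by
    intro M
    have hl1M : (0:ℝ) < l1 ^ M := pow_pos hc.hl1 M
    apply squeeze_zero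
      (fun n => hc.Titer_nonneg n (fun z _ => indM_nonneg M z) hy)
      (g := fun n => (a n - a (n + M)) * (l1 ^ M)⁻¹)
    · intro n
      have e1 : a n = (Top l1 m1 l2 m2)^[n] oneOff y := rfl
      have e2 : a (n + M) = (Top l1 m1 l2 m2)^[n + M] oneOff y := rfl
      have h5 : l1 ^ M * (Top l1 m1 l2 m2)^[n] (indM M) y ≤ a n - a (n + M) := by
        have h6 := hc.G_drop M n hy
        linarith [e1, e2, h6]
      calc (Top l1 m1 l2 m2)^[n] (indM M) y
          = l1 ^ M * (Top l1 m1 l2 m2)^[n] (indM M) y * (l1 ^ M)⁻¹ := by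
            field_simp
        _ ≤ (a n - a (n + M)) * (l1 ^ M)⁻¹ := by
            apply mul_le_mul_of_nonneg_right h5 (by positivity)
    · have h2 : Filter.Tendsto (fun n => a (n + M)) Filter.atTop
          (nhds (⨅ n, a n)) := hconv.comp (Filter.tendsto_add_atTop_nat M)
      have h3 := (hconv.sub h2).mul_const (l1 ^ M)⁻¹
      simpa using h3
  rw [Metric.tendsto_atTop]
  intro ε hε
  have hcpos : (0:ℝ) < 1 + cc l1 m1 l2 m2 := by linarith [hc.cc_pos]
  have hR : Filter.Tendsto (fun M : ℕ => (1 + cc l1 m1 l2 m2) * Rone l1 m1 ^ M)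
      Filter.atTop (nhds 0) := by
    have := (tendsto_pow_atTop_nhds_zero_of_lt_one hc.R1_pos.le
      hc.R1_lt_one).const_mul (1 + cc l1 m1 l2 m2)
    simpa using this
  obtain ⟨M, hM⟩ := (Metric.tendsto_atTop.1 hR) (ε / 2) (by linarith)
  have hM' : (1 + cc l1 m1 l2 m2) * Rone l1 m1 ^ M < ε / 2 := by
    have := hM M le_rfl
    rw [Real.dist_eq, sub_zero] at this
    calc (1 + cc l1 m1 l2 m2) * Rone l1 m1 ^ M
        ≤ |(1 + cc l1 m1 l2 m2) * Rone l1 m1 ^ M| := le_abs_self _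
      _ < ε / 2 := this
  obtain ⟨N, hN⟩ := (Metric.tendsto_atTop.1 (hSlim M))
    (ε / (2 * (1 + cc l1 m1 l2 m2))) (by positivity)
  refine ⟨N, fun n hn => ?_⟩
  have hw0 : 0 ≤ (Top l1 m1 l2 m2)^[n] (hOff l1 m1 l2 m2) y :=
    hc.Titer_nonneg n hc.hOff_nonneg hy
  rw [Real.dist_eq, sub_zero, abs_of_nonneg hw0]
  have hb := hc.wN_le M n hy
  have hS0 : 0 ≤ (Top l1 m1 l2 m2)^[n] (indM M) y :=
    hc.Titer_nonneg n (fun z _ => indM_nonneg M z) hy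
  have hS := hN n hn
  rw [Real.dist_eq, sub_zero, abs_of_nonneg hS0] at hS
  have han1 : a n ≤ 1 := hc.G_le_one n hy
  have han0 : 0 ≤ a n := hc.G_nonneg n hy
  have hRM : (0:ℝ) ≤ Rone l1 m1 ^ M := pow_nonneg hc.R1_pos.le M
  have key1 : (1 + cc l1 m1 l2 m2) * (Top l1 m1 l2 m2)^[n] (indM M) y < ε / 2 := by
    have h6 := mul_lt_mul_of_pos_left hS hcpos
    have h7 : (1 + cc l1 m1 l2 m2) * (ε / (2 * (1 + cc l1 m1 l2 m2))) = ε / 2 := by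
      field_simp
    linarith
  nlinarith [mul_le_mul_of_nonneg_left han1
    (mul_nonneg hcpos.le hRM), mul_nonneg (mul_nonneg hcpos.le hRM) han0]

lemma Ctx.vN_tendsto (hc : Ctx l1 m1 l2 m2) {y : ℤ × ℤ} (hy : Good y) :
    Filter.Tendsto (fun n => vN l1 m1 l2 m2 n y) Filter.atTop
      (nhds (hfun l1 m1 l2 m2 y)) := by
  have heq : ∀ n, vN l1 m1 l2 m2 n y =
      hfun l1 m1 l2 m2 y - (Top l1 m1 l2 m2)^[n] (hOff l1 m1 l2 m2) y := by
    intro n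
    have := hc.vN_plus n y hy
    linarith
  have := Filter.Tendsto.sub (tendsto_const_nhds
    (x := hfun l1 m1 l2 m2 y) (f := Filter.atTop)) (hc.w_tendsto hy)
  rw [sub_zero] at this
  exact this.congr fun n => (heq n).symm

lemma Ctx.vN_mono (hc : Ctx l1 m1 l2 m2) {y : ℤ × ℤ} (hy : Good y) (n : ℕ) :
    vN l1 m1 l2 m2 n y ≤ vN l1 m1 l2 m2 (n + 1) y := by
  have h1 := hc.vN_plus n y hy
  have h2 := hc.vN_plus (n + 1) y hy
  have h3 : (Top l1 m1 l2 m2)^[n+1] (hOff l1 m1 l2 m2) y ≤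
      (Top l1 m1 l2 m2)^[n] (hOff l1 m1 l2 m2) y := by
    rw [Function.iterate_succ_apply]
    apply hc.Titer_mono n (f := Top l1 m1 l2 m2 (hOff l1 m1 l2 m2))
      (g := hOff l1 m1 l2 m2) _ y hy
    intro z hz
    rw [hOff]
    split_ifs with hd
    · rw [Top, if_pos hd]
    · rw [Top, if_neg hd]
      have : ∀ v ∈ MV, pw l1 m1 l2 m2 v * hOff l1 m1 l2 m2 (ystep z v) ≤
          pw l1 m1 l2 m2 v * hfun l1 m1 l2 m2 (ystep z v) := by
        intro v hv
        apply mul_le_mul_of_nonneg_left _ (hc.pw_nonneg v)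
        rw [hOff]
        split_ifs with hd2
        · rw [hc.hfun_diag hd2]; norm_num
        · exact le_refl _
      calc ∑ v ∈ MV, pw l1 m1 l2 m2 v * hOff l1 m1 l2 m2 (ystep z v)
          ≤ ∑ v ∈ MV, pw l1 m1 l2 m2 v * hfun l1 m1 l2 m2 (ystep z v) :=
            Finset.sum_le_sum this
        _ = hfun l1 m1 l2 m2 z := by
            have hs := hc.harmonic_sum (a := z.1) (b := z.2) hz.1 hd
            simpa using hs
  linarith

lemma Ctx.vN_nonneg (hc : Ctx l1 m1 l2 m2) (n : ℕ) (y : ℤ × ℤ) :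
    0 ≤ vN l1 m1 l2 m2 n y := by
  induction n generalizing y with
  | zero => simp only [vN]; split_ifs <;> norm_num
  | succ n ih =>
    simp only [vN]
    split_ifs with hd
    · norm_num
    · exact Finset.sum_nonneg fun v _ => mul_nonneg (hc.pw_nonneg v) (ih _)

-- ===== tuple combinatorics =====

def lhitb (y : ℤ × ℤ) : List (ℤ × ℤ) → Bool
  | [] => y.1 == y.2
  | v :: L => (y.1 == y.2) || lhitb (ystep y v) L

def VT (l1 m1 l2 m2 : ℝ) (N : ℕ) (y : ℤ × ℤ) : ℝ :=
  ∑ w ∈ Fintype.piFinset (fun _ : Fin N => MV),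
    if lhitb y (List.ofFn w) then ∏ i, pw l1 m1 l2 m2 (w i) else 0

lemma Ctx.sum_piFinset_prod (hc : Ctx l1 m1 l2 m2) (N : ℕ) :
    ∑ w ∈ Fintype.piFinset (fun _ : Fin N => MV), ∏ i, pw l1 m1 l2 m2 (w i) = 1 := by
  have h := (Finset.prod_univ_sum (fun _ : Fin N => MV)
    (fun _ v => pw l1 m1 l2 m2 v)).symm
  rw [h, hc.sum_pw]
  simp

lemma Ctx.VT_eq_vN (hc : Ctx l1 m1 l2 m2) :
    ∀ (N : ℕ) (y : ℤ × ℤ), VT l1 m1 l2 m2 N y = vN l1 m1 l2 m2 N y := by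
  intro N
  induction N with
  | zero =>
    intro y
    rw [VT]
    have huniq : (Fintype.piFinset (fun _ : Fin 0 => MV)) =
        {(default : Fin 0 → ℤ × ℤ)} := by
      apply Finset.eq_singleton_iff_unique_mem.2
      constructor
      · rw [Fintype.mem_piFinset]; intro i; exact i.elim0
      · intro x _
        exact Subsingleton.elim x default
    rw [huniq, Finset.sum_singleton]
    simp only [List.ofFn_zero, lhitb, vN]
    rw [show (Finset.univ : Finset (Fin 0)) = ∅ from rfl, Finset.prod_empty]
    by_cases hd : y.1 = y.2
    · rw [if_pos (by simpa using hd), if_pos hd]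
    · rw [if_neg (by simpa using hd), if_neg hd]
  | succ N ih =>
    intro y
    rw [VT]
    have hbij : ∑ w ∈ Fintype.piFinset (fun _ : Fin (N+1) => MV),
        (if lhitb y (List.ofFn w) then ∏ i, pw l1 m1 l2 m2 (w i) else 0) =
        ∑ p ∈ MV ×ˢ Fintype.piFinset (fun _ : Fin N => MV),
          (if (y.1 == y.2) || lhitb (ystep y p.1) (List.ofFn p.2) then
            pw l1 m1 l2 m2 p.1 * ∏ i, pw l1 m1 l2 m2 (p.2 i) else 0) := by
      apply Finset.sum_nbij' (i := fun w => (w 0, Fin.tail w))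
        (j := fun p => Fin.cons p.1 p.2)
      · intro w hw
        rw [Fintype.mem_piFinset] at hw
        rw [Finset.mem_product]
        exact ⟨hw 0, by rw [Fintype.mem_piFinset]; intro i; exact hw i.succ⟩
      · intro p hp
        rw [Finset.mem_product] at hp
        rw [Fintype.mem_piFinset]
        intro i
        refine Fin.cases ?_ ?_ i
        · rw [Fin.cons_zero]; exact hp.1
        · intro j
          rw [Fin.cons_succ]
          exact Fintype.mem_piFinset.1 hp.2 j
      · intro w _
        exact Fin.cons_self_tail w
      · intro p _
        simp [Fin.tail_cons]
      · intro w _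
        rw [List.ofFn_succ, Fin.prod_univ_succ]
        rfl
    rw [hbij, Finset.sum_product]
    by_cases hd : y.1 = y.2
    · have hbeq : (y.1 == y.2) = true := by simpa using hd
      simp only [hbeq, Bool.true_or, if_true]
      have hin : ∀ v ∈ MV, ∑ u ∈ Fintype.piFinset (fun _ : Fin N => MV),
          pw l1 m1 l2 m2 v * ∏ i, pw l1 m1 l2 m2 (u i) = pw l1 m1 l2 m2 v := by
        intro v _
        rw [← Finset.mul_sum, hc.sum_piFinset_prod N, mul_one]
      rw [Finset.sum_congr rfl hin, hc.sum_pw]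
      simp only [vN]
      rw [if_pos hd]
    · have hbeq : (y.1 == y.2) = false := by simpa using hd
      simp only [hbeq, Bool.false_or]
      have hin : ∀ v ∈ MV, (∑ u ∈ Fintype.piFinset (fun _ : Fin N => MV),
          if lhitb (ystep y v) (List.ofFn u) then
            pw l1 m1 l2 m2 v * ∏ i, pw l1 m1 l2 m2 (u i) else 0) =
          pw l1 m1 l2 m2 v * vN l1 m1 l2 m2 N (ystep y v) := by
        intro v _
        rw [← ih (ystep y v), VT, Finset.mul_sum]
        apply Finset.sum_congr rfl
        intro u _
        split_ifs <;> simp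
      rw [Finset.sum_congr rfl hin]
      simp only [vN]
      rw [if_neg hd]

-- ===== path bridge =====

lemma pathY_shift (y : ℤ × ℤ) (inc : ℕ → ℤ × ℤ) :
    ∀ n, pathY y inc (n + 1) = pathY (ystep y (inc 1)) (fun k => inc (k + 1)) n := by
  intro n
  induction n with
  | zero => rfl
  | succ n ih =>
    show stepY (pathY y inc (n + 1)) _ = _
    rw [ih]
    rfl

lemma hit_iff : ∀ (N : ℕ) (y : ℤ × ℤ) (inc : ℕ → ℤ × ℤ),
    (∃ n ≤ N, (pathY y inc n).1 = (pathY y inc n).2) ↔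
      lhitb y (List.ofFn (fun i : Fin N => inc ((i : ℕ) + 1))) = true := by
  intro N
  induction N with
  | zero =>
    intro y inc
    constructor
    · rintro ⟨n, hn, h⟩
      obtain rfl : n = 0 := by omega
      simpa [List.ofFn_zero, lhitb, pathY] using h
    · intro h
      exact ⟨0, le_refl 0, by simpa [List.ofFn_zero, lhitb, pathY] using h⟩
  | succ N ih =>
    intro y inc
    rw [List.ofFn_succ]
    rw [show ∀ v L, lhitb y (v :: L) = ((y.1 == y.2) || lhitb (ystep y v) L)
      from fun _ _ => rfl]
    rw [Bool.or_eq_true, beq_iff_eq]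
    constructor
    · rintro ⟨n, hn, h⟩
      cases n with
      | zero => exact Or.inl h
      | succ n =>
        right
        rw [pathY_shift] at h
        exact (ih (ystep y (inc 1)) (fun k => inc (k + 1))).1 ⟨n, by omega, h⟩
    · rintro (h | h)
      · exact ⟨0, by omega, h⟩
      · obtain ⟨n, hn, h2⟩ := (ih (ystep y (inc 1)) (fun k => inc (k + 1))).2 h
        exact ⟨n + 1, by omega, by rw [pathY_shift]; exact h2⟩

lemma hitTime_lt_top_iff {A : Set (ℤ × ℤ)} {p : ℕ → ℤ × ℤ} :
    hitTime A p < ⊤ ↔ ∃ n, p n ∈ A := by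
  constructor
  · intro h
    by_contra hn
    push_neg at hn
    have hempty : {n : ℕ | p n ∈ A} = ∅ := Set.eq_empty_iff_forall_notMem.2 hn
    rw [hitTime, hempty, Set.image_empty, sInf_empty] at h
    exact lt_irrefl _ h
  · rintro ⟨n, hn⟩
    have h1 : hitTime A p ≤ (n : ℕ∞) := sInf_le ⟨n, hn, rfl⟩
    exact lt_of_le_of_lt h1 (WithTop.coe_lt_top n)

-- ===== measure of cylinders =====

variable {Ω : Type} [MeasurableSpace Ω] {μ : MeasureTheory.Measure Ω}
  {I : ℕ → Ω → ℤ × ℤ}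

def cylSet (I : ℕ → Ω → ℤ × ℤ) (N : ℕ) (w : Fin N → ℤ × ℤ) : Set Ω :=
  ⋂ i : Fin N, I ((i : ℕ) + 1) ⁻¹' {w i}

lemma cyl_measurable (hmeas : ∀ k, Measurable (I k)) (N : ℕ) (w : Fin N → ℤ × ℤ) :
    MeasurableSet (cylSet I N w) :=
  MeasurableSet.iInter fun i => (hmeas _) (measurableSet_singleton _)

lemma meas_single (hc : Ctx l1 m1 l2 m2) (hI : IncrementsLaw l1 m1 l2 m2 μ I)
    (k : ℕ) {v : ℤ × ℤ} (hv : v ∈ MV) :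
    μ (I k ⁻¹' {v}) = ENNReal.ofReal (pw l1 m1 l2 m2 v) := by
  obtain ⟨-, -, hlaw⟩ := hI
  rcases mem_MV_cases hv with rfl | rfl | rfl | rfl
  · rw [pw_a]; exact (hlaw k).1
  · rw [pw_b]; exact (hlaw k).2.1
  · rw [pw_c]; exact (hlaw k).2.2.1
  · rw [pw_d]; exact (hlaw k).2.2.2

lemma meas_null (hc : Ctx l1 m1 l2 m2) (hI : IncrementsLaw l1 m1 l2 m2 μ I)
    [MeasureTheory.IsProbabilityMeasure μ] (k : ℕ) {v : ℤ × ℤ}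
    (hv : v ∉ MV) : μ (I k ⁻¹' {v}) = 0 := by
  have hmeas := hI.1
  have htot : μ (I k ⁻¹' (↑MV : Set (ℤ × ℤ))) = 1 := by
    have hset : (I k ⁻¹' (↑MV : Set (ℤ × ℤ))) =
        ⋃ v ∈ (MV : Finset (ℤ × ℤ)), I k ⁻¹' {v} := by
      ext ω; simp
    rw [hset, MeasureTheory.measure_biUnion_finset ?pd ?pm]
    · rw [Finset.sum_congr rfl (fun v hv => meas_single hc hI k hv),
        ← ENNReal.ofReal_sum_of_nonneg (fun v _ => hc.pw_nonneg v), hc.sum_pw,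
        ENNReal.ofReal_one]
    · intro a _ b _ hab
      apply Set.disjoint_left.2
      intro ω h1 h2
      rw [Set.mem_preimage, Set.mem_singleton_iff] at h1 h2
      exact hab (h1 ▸ h2)
    · exact fun v _ => (hmeas k) (measurableSet_singleton _)
  have hsub : I k ⁻¹' {v} ⊆ (I k ⁻¹' (↑MV : Set (ℤ × ℤ)))ᶜ := by
    intro ω h
    rw [Set.mem_preimage, Set.mem_singleton_iff] at h
    intro hmem
    rw [Set.mem_preimage, h] at hmem
    exact hv (by simpa using hmem)
  have hc0 : μ ((I k ⁻¹' (↑MV : Set (ℤ × ℤ)))ᶜ) = 0 := by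
    rw [MeasureTheory.measure_compl ((hmeas k) (MV.measurableSet))
      (MeasureTheory.measure_ne_top μ _), htot]
    simp
  exact le_antisymm (le_trans (MeasureTheory.measure_mono hsub) (le_of_eq hc0))
    zero_le

lemma cyl_measure (hI : IncrementsLaw l1 m1 l2 m2 μ I) (N : ℕ)
    (w : Fin N → ℤ × ℤ) :
    μ (cylSet I N w) = ∏ i : Fin N, μ (I ((i : ℕ) + 1) ⁻¹' {w i}) := by
  classical
  obtain ⟨hmeas, hind, -⟩ := hI
  set wex : ℕ → ℤ × ℤ := fun k => if h : k - 1 < N then w ⟨k - 1, h⟩ else (0, 0)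
    with hwex
  have hkey : ∀ i : Fin N, wex ((i : ℕ) + 1) = w i := by
    intro i
    rw [hwex]
    simp only [Nat.add_sub_cancel]
    rw [dif_pos i.isLt]
  have hseteq : cylSet I N w =
      ⋂ k ∈ Finset.image (fun i : Fin N => (i : ℕ) + 1) Finset.univ,
        I k ⁻¹' {wex k} := by
    ext ω
    simp only [cylSet, Set.mem_iInter, Set.mem_preimage, Set.mem_singleton_iff,
      Finset.mem_image, Finset.mem_univ, true_and]
    constructor
    · rintro h k ⟨i, rfl⟩
      rw [hkey i]; exact h i
    · intro h i
      rw [← hkey i]; exact h _ ⟨i, rfl⟩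
  rw [hseteq, hind.meas_biInter (fun k _ => ⟨{wex k}, measurableSet_singleton _, rfl⟩)]
  rw [Finset.prod_image (fun a _ b _ hab => Fin.ext (by omega))]
  exact Finset.prod_congr rfl fun i _ => by rw [hkey i]

lemma Ctx.measure_EN (hc : Ctx l1 m1 l2 m2) (hI : IncrementsLaw l1 m1 l2 m2 μ I)
    [MeasureTheory.IsProbabilityMeasure μ] (y : ℤ × ℤ) (N : ℕ) :
    μ {ω | lhitb y (List.ofFn (fun i : Fin N => I ((i : ℕ) + 1) ω)) = true} =
      ENNReal.ofReal (vN l1 m1 l2 m2 N y) := by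
  classical
  have hset : {ω | lhitb y (List.ofFn (fun i : Fin N => I ((i : ℕ) + 1) ω)) = true} =
      ⋃ w : Fin N → ℤ × ℤ,
        if lhitb y (List.ofFn w) = true then cylSet I N w else ∅ := by
    ext ω
    simp only [Set.mem_setOf_eq, Set.mem_iUnion]
    constructor
    · intro h
      refine ⟨fun i => I ((i : ℕ) + 1) ω, ?_⟩
      rw [if_pos h]
      exact Set.mem_iInter.2 fun i => rfl
    · rintro ⟨w, hw⟩
      by_cases hl : lhitb y (List.ofFn w) = true
      · rw [if_pos hl] at hw
        have he : (fun i : Fin N => I ((i : ℕ) + 1) ω) = w :=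
          funext fun i => Set.mem_iInter.1 hw i
        rw [he]
        exact hl
      · rw [if_neg hl] at hw
        exact absurd hw (Set.notMem_empty ω)
  rw [hset, MeasureTheory.measure_iUnion ?pd ?pm]
  · have hterm : ∀ w : Fin N → ℤ × ℤ,
        μ (if lhitb y (List.ofFn w) = true then cylSet I N w else ∅) =
        if lhitb y (List.ofFn w) = true then μ (cylSet I N w) else 0 := by
      intro w; split_ifs <;> simp
    rw [tsum_congr hterm,
      tsum_eq_sum (s := Fintype.piFinset (fun _ : Fin N => MV)) ?outside]
    · have hin : ∀ w ∈ Fintype.piFinset (fun _ : Fin N => MV),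
          (if lhitb y (List.ofFn w) = true then μ (cylSet I N w) else 0) =
          ENNReal.ofReal
            (if lhitb y (List.ofFn w) then ∏ i, pw l1 m1 l2 m2 (w i) else 0) := by
        intro w hw
        have hcyl : μ (cylSet I N w) =
            ENNReal.ofReal (∏ i, pw l1 m1 l2 m2 (w i)) := by
          rw [cyl_measure hI N w,
            Finset.prod_congr rfl
              (fun i _ => meas_single hc hI _ (Fintype.mem_piFinset.1 hw i)),
            ← ENNReal.ofReal_prod_of_nonneg (fun i _ => hc.pw_nonneg _)]
        split_ifs with h
        · exact hcyl
        · simp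
      rw [Finset.sum_congr rfl hin,
        ← ENNReal.ofReal_sum_of_nonneg (fun w _ => by
          split_ifs
          · exact Finset.prod_nonneg (fun i _ => hc.pw_nonneg _)
          · exact le_refl 0)]
      rw [show (∑ w ∈ Fintype.piFinset (fun _ : Fin N => MV),
          if lhitb y (List.ofFn w) then ∏ i, pw l1 m1 l2 m2 (w i) else 0) =
          VT l1 m1 l2 m2 N y from rfl]
      rw [hc.VT_eq_vN N y]
    · intro w hw
      rw [Fintype.mem_piFinset] at hw
      push_neg at hw
      obtain ⟨i, hi⟩ := hw
      have h0 : μ (cylSet I N w) = 0 := by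
        apply le_antisymm _ zero_le
        calc μ (cylSet I N w) ≤ μ (I ((i : ℕ) + 1) ⁻¹' {w i}) :=
              MeasureTheory.measure_mono (Set.iInter_subset _ i)
          _ = 0 := meas_null hc hI _ hi
      split_ifs <;> simp [h0]
  · intro w w' hne
    simp only [Function.onFun]
    split_ifs with h1 h2 h2
    · have hex : ∃ i, w i ≠ w' i := by
        by_contra hno
        push_neg at hno
        exact hne (funext hno)
      obtain ⟨i, hi⟩ := hex
      apply Set.disjoint_left.2
      intro ω hω1 hω2
      have e1 : I ((i : ℕ) + 1) ω = w i := Set.mem_iInter.1 hω1 i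
      have e2 : I ((i : ℕ) + 1) ω = w' i := Set.mem_iInter.1 hω2 i
      exact hi (e1.symm.trans e2)
    all_goals simp
  · intro w
    split_ifs
    · exact cyl_measurable hI.1 N w
    · exact MeasurableSet.empty

end S17

theorem stmt17 {Ω : Type} [MeasurableSpace Ω] (μ : Measure Ω) [IsProbabilityMeasure μ]
    (l1 m1 l2 m2 : ℝ)
    (hl1 : 0 < l1) (hm1 : 0 < m1) (hl2 : 0 < l2) (hm2 : 0 < m2)
    (hsum : l1 + l2 + m1 + m2 = 1)
    (hρ1 : l1 / m1 < 1) (hρ2 : l2 / m2 < 1)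
    (hord1 : l2 / m2 ≤ (l1 + l2) / (m1 + m2))
    (hord2 : (l1 + l2) / (m1 + m2) ≤ l1 / m1)
    (hneq : l1 / m1 ≠ l2 / m2)
    (hr2 : ((l1 + l2) / (m1 + m2)) ^ 2 < l2 / m2)
    (hharm : (l1 / m1) * (l2 / m2) = ((l1 + l2) / (m1 + m2)) ^ 2)
    (I : ℕ → Ω → ℤ × ℤ) (hI : IncrementsLaw l1 m1 l2 m2 μ I) :
    ∀ y : ℤ × ℤ, 0 ≤ y.2 → y.2 ≤ y.1 →
      (μ {ω | tauY y (fun k => I k ω) < ⊤}).toReal =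
        ((l1 + l2) / (m1 + m2)) ^ (y.1 - y.2) +
          ((l1 + l2) / (m1 + m2) * (1 - (l1 + l2) / (m1 + m2)) /
              ((l1 + l2) / (m1 + m2) - l2 / m2)) *
            ((l1 / m1) ^ y.1 -
              ((l1 + l2) / (m1 + m2)) ^ (y.1 - y.2) * (l1 / m1) ^ y.2) := by
  intro y hy2 hy12
  have hc : S17.Ctx l1 m1 l2 m2 := ⟨hl1, hm1, hl2, hm2, hsum, hρ1, hρ2, hord1, hneq, hharm⟩
  have hg : S17.Good y := ⟨hy2, hy12⟩
  have hE : {ω | tauY y (fun k => I k ω) < ⊤} =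
      ⋃ N : ℕ, {ω | ∃ n ≤ N, (pathY y (fun k => I k ω) n).1 =
        (pathY y (fun k => I k ω) n).2} := by
    ext ω
    rw [Set.mem_setOf_eq, tauY, S17.hitTime_lt_top_iff]
    simp only [Set.mem_iUnion, Set.mem_setOf_eq]
    constructor
    · rintro ⟨n, hn⟩; exact ⟨n, n, le_refl n, hn⟩
    · rintro ⟨N, n, _, hn⟩; exact ⟨n, hn⟩
  have hmono : Monotone (fun N : ℕ => {ω | ∃ n ≤ N,
      (pathY y (fun k => I k ω) n).1 = (pathY y (fun k => I k ω) n).2}) := by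
    intro a b hab ω
    rintro ⟨n, hn, h⟩
    exact ⟨n, le_trans hn hab, h⟩
  have hEN : ∀ N : ℕ, μ {ω | ∃ n ≤ N, (pathY y (fun k => I k ω) n).1 =
      (pathY y (fun k => I k ω) n).2} = ENNReal.ofReal (S17.vN l1 m1 l2 m2 N y) := by
    intro N
    have hsame : {ω | ∃ n ≤ N, (pathY y (fun k => I k ω) n).1 =
        (pathY y (fun k => I k ω) n).2} =
        {ω | S17.lhitb y (List.ofFn (fun i : Fin N => I ((i : ℕ) + 1) ω)) = true} :=
      Set.ext fun ω => S17.hit_iff N y (fun k => I k ω)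
    rw [hsame]
    exact hc.measure_EN hI y N
  rw [hE, Directed.measure_iUnion hmono.directed_le]
  simp only [hEN]
  have h1 : Filter.Tendsto (fun N => ENNReal.ofReal (S17.vN l1 m1 l2 m2 N y))
      Filter.atTop (nhds (ENNReal.ofReal (S17.hfun l1 m1 l2 m2 y))) :=
    (ENNReal.continuous_ofReal.tendsto _).comp (hc.vN_tendsto hg)
  have h2 : Monotone (fun N => ENNReal.ofReal (S17.vN l1 m1 l2 m2 N y)) :=
    monotone_nat_of_le_succ fun n => ENNReal.ofReal_le_ofReal (hc.vN_mono hg n)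
  have h4 := tendsto_nhds_unique (tendsto_atTop_iSup h2) h1
  rw [h4, ENNReal.toReal_ofReal (hc.hfun_nonneg hy2 hy12)]
  rfl
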